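/- Series stochastic integral: if Ψ = (Ψ_i) is a sequence of adapted PUC integrands with ∫₀ᵀ Σ_i E|Ψ_i(τ)|² dτ < ∞, then Σ_i ∫₀ᵀ Ψ_i(τ)dW_i(τ) converges in L²(Ω;H) and E|Σ_i ∫₀ᵀ Ψ_i dW_i|²_H = ∫₀ᵀ Σ_i E|Ψ_i(τ)|²_H dτ. -/

import Mathlib

open MeasureTheory ProbabilityTheory Filter

variable {Ω : Type*} [MeasurableSpace Ω]
  {H : Type*} [NormedAddCommGroup H] [InnerProductSpace ℝ H] [CompleteSpace H]

/-- `Ψ : [0,T] → L²(Ω;H)` is piecewise uniformly continuous. -/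
def PUCon (P : Measure Ω) (T : ℝ) (Ψ : ℝ → Ω → H) : Prop :=
  ∃ (m : ℕ) (a : ℕ → ℝ), a 0 = 0 ∧ a m = T ∧ (∀ i < m, a i < a (i + 1)) ∧
    ∀ i < m, ∀ ε : ℝ, 0 < ε → ∃ δ : ℝ, 0 < δ ∧
      ∀ s ∈ Set.Ioo (a i) (a (i + 1)), ∀ t ∈ Set.Ioo (a i) (a (i + 1)),
        |s - t| < δ → ∫ ω, ‖Ψ s ω - Ψ t ω‖ ^ 2 ∂P < ε

set_option linter.unusedSectionVars false

private lemma lp_norm_sq {P : Measure Ω} (f : Lp H 2 P) :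
    ∫ ω, ‖f ω‖ ^ 2 ∂P = ‖f‖ ^ 2 := by
  rw [← real_inner_self_eq_norm_sq f, L2.inner_def]
  exact integral_congr_ae (Eventually.of_forall fun ω => (real_inner_self_eq_norm_sq _).symm)

private lemma norm_sum_sq_of_orth {E : Type*} [NormedAddCommGroup E] [InnerProductSpace ℝ E]
    (v : ℕ → E) (s : Finset ℕ) (h : ∀ i j, i ≠ j → (inner ℝ (v i) (v j) : ℝ) = 0) :
    ‖∑ i ∈ s, v i‖ ^ 2 = ∑ i ∈ s, ‖v i‖ ^ 2 := by
  rw [← real_inner_self_eq_norm_sq, sum_inner]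
  refine Finset.sum_congr rfl fun i hi => ?_
  rw [inner_sum, Finset.sum_eq_single_of_mem i hi (fun b _ hb => h i b (Ne.symm hb)),
    real_inner_self_eq_norm_sq]

private lemma lp_coeFn_sum {P : Measure Ω} (F : ℕ → Lp H 2 P) (s : Finset ℕ) :
    ⇑(∑ i ∈ s, F i) =ᵐ[P] fun ω => ∑ i ∈ s, F i ω := by
  classical
  induction s using Finset.induction with
  | empty => simp only [Finset.sum_empty]; exact Lp.coeFn_zero H 2 P
  | @insert a s hni ih =>
    rw [Finset.sum_insert hni]
    filter_upwards [Lp.coeFn_add (F a) (∑ i ∈ s, F i), ih] with ω h1 h2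
    simp only [h1, Pi.add_apply, h2, Finset.sum_insert hni]

private lemma puc_intervalIntegrable {P : Measure Ω}
    {T : ℝ} (hT : 0 < T) {Ψ : ℝ → Ω → H}
    (hL2 : ∀ t, MemLp (Ψ t) 2 P) (hPUC : PUCon P T Ψ)
    {g : ℝ → ℝ} (hg : IntegrableOn g (Set.Ioc 0 T) volume)
    (hbound : ∀ t ∈ Set.Icc (0:ℝ) T, (∫ ω, ‖Ψ t ω‖ ^ 2 ∂P) ≤ g t) :
    IntervalIntegrable (fun t => ∫ ω, ‖Ψ t ω‖ ^ 2 ∂P) volume 0 T := by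
  obtain ⟨m, p, hp0, hpT, hplt, hcont⟩ := hPUC
  set Φ : ℝ → Lp H 2 P := fun t => (hL2 t).toLp (Ψ t) with hΦ
  have hft : ∀ t, (∫ ω, ‖Ψ t ω‖ ^ 2 ∂P) = ‖Φ t‖ ^ 2 := by
    intro t
    rw [← lp_norm_sq (Φ t)]
    refine integral_congr_ae ?_
    filter_upwards [(hL2 t).coeFn_toLp] with ω h
    rw [hΦ, h]
  have hdist : ∀ s t, dist (Φ s) (Φ t) ^ 2 = ∫ ω, ‖Ψ s ω - Ψ t ω‖ ^ 2 ∂P := by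
    intro s t
    rw [dist_eq_norm, ← lp_norm_sq (Φ s - Φ t)]
    refine integral_congr_ae ?_
    filter_upwards [Lp.coeFn_sub (Φ s) (Φ t), (hL2 s).coeFn_toLp, (hL2 t).coeFn_toLp]
      with ω h1 h2 h3
    rw [h1, Pi.sub_apply, hΦ]
    simp only at h2 h3 ⊢
    rw [h2, h3]
  -- the union of open pieces
  set U : Set ℝ := ⋃ j ∈ Finset.range m, Set.Ioo (p j) (p (j + 1)) with hU
  have hUopen : IsOpen U := isOpen_biUnion fun j _ => isOpen_Ioo
  -- Φ is continuous on each piece, hence f continuous on U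
  have hΦcont : ContinuousOn (fun t => ∫ ω, ‖Ψ t ω‖ ^ 2 ∂P) U := by
    have hΦc : ContinuousOn Φ U := by
      intro x hx
      simp only [hU, Set.mem_iUnion, Finset.mem_range] at hx
      obtain ⟨j, hj, hxj⟩ := hx
      have hsub : Set.Ioo (p j) (p (j + 1)) ⊆ U := by
        intro y hy; simp only [hU, Set.mem_iUnion, Finset.mem_range]; exact ⟨j, hj, hy⟩
      have : ContinuousWithinAt Φ (Set.Ioo (p j) (p (j + 1))) x := by
        rw [Metric.continuousWithinAt_iff]
        intro ε hε
        obtain ⟨δ, hδ, hδ'⟩ := hcont j hj (ε ^ 2) (pow_pos hε 2)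
        refine ⟨δ, hδ, fun {y} hy hyx => ?_⟩
        have h2 : dist (Φ y) (Φ x) ^ 2 < ε ^ 2 := by
          rw [hdist]
          exact hδ' y hy x hxj (by rwa [Real.dist_eq] at hyx)
        exact lt_of_pow_lt_pow_left₀ 2 hε.le h2
      exact (this.continuousAt (isOpen_Ioo.mem_nhds hxj)).continuousWithinAt
    exact ContinuousOn.pow (continuous_norm.comp_continuousOn hΦc) 2 |>.congr
      fun t _ => hft t
  -- a.e. measurability on Ioc 0 T
  have hUm : MeasurableSet U := hUopen.measurableSet
  have hmeasU : AEMeasurable (fun t => ∫ ω, ‖Ψ t ω‖ ^ 2 ∂P) (volume.restrict U) :=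
    hΦcont.aemeasurable hUm
  have hsubset : Set.Ioc 0 T \ U ⊆ ↑((Finset.range (m + 1)).image p) := by
    intro t ⟨htIoc, htU⟩
    by_contra htp
    simp only [Finset.coe_image, Set.mem_image, Finset.mem_coe, Finset.mem_range] at htp
    push_neg at htp
    have hne : ∀ j ≤ m, p j ≠ t := fun j hj => htp j (Nat.lt_succ_of_le hj)
    have hm0 : 0 < m := by
      rcases Nat.eq_zero_or_pos m with h | h
      · exfalso; rw [h] at hpT; rw [hp0] at hpT; exact absurd hpT hT.ne
      · exact h
    set j := Nat.findGreatest (fun j => p j < t) m with hj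
    have hP0 : p 0 < t := by rw [hp0]; exact htIoc.1
    have hjlt : p j < t :=
      Nat.findGreatest_spec (P := fun j => p j < t) (Nat.zero_le m) hP0
    have hjle : j ≤ m := Nat.findGreatest_le m
    have hjm : j < m := by
      rcases lt_or_eq_of_le hjle with h | h
      · exact h
      · exfalso
        rw [h] at hjlt; rw [hpT] at hjlt
        exact absurd htIoc.2 (not_le.mpr hjlt)
    have hnext : ¬ p (j + 1) < t :=
      Nat.findGreatest_is_greatest (Nat.lt_succ_self j) (Nat.succ_le_of_lt hjm)
    have htlt : t < p (j + 1) :=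
      lt_of_le_of_ne (not_lt.mp hnext) (Ne.symm (hne (j + 1) (Nat.succ_le_of_lt hjm)))
    exact htU (by
      simp only [hU, Set.mem_iUnion, Finset.mem_range]
      exact ⟨j, hjm, hjlt, htlt⟩)
  have hnull : volume (Set.Ioc (0:ℝ) T \ U) = 0 :=
    measure_mono_null hsubset (Finset.measure_zero _ _)
  have haeeq : (Set.Ioc (0:ℝ) T : Set ℝ) =ᵐ[volume] ((Set.Ioc (0:ℝ) T ∩ U : Set ℝ)) := by
    rw [MeasureTheory.ae_eq_set]
    constructor
    · rwa [Set.diff_inter, Set.diff_self, Set.empty_union]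
    · rw [Set.diff_eq_empty.mpr Set.inter_subset_left]; exact measure_empty
  have hmeas : AEMeasurable (fun t => ∫ ω, ‖Ψ t ω‖ ^ 2 ∂P) (volume.restrict (Set.Ioc 0 T)) := by
    rw [Measure.restrict_congr_set haeeq]
    exact hmeasU.mono_measure
      (Measure.restrict_mono Set.inter_subset_right le_rfl)
  rw [intervalIntegrable_iff, Set.uIoc_of_le hT.le]
  refine Integrable.mono hg hmeas.aestronglyMeasurable ?_
  rw [ae_restrict_iff' measurableSet_Ioc]
  refine Eventually.of_forall fun t ht => ?_
  have h1 : (0:ℝ) ≤ ∫ ω, ‖Ψ t ω‖ ^ 2 ∂P := integral_nonneg fun ω => sq_nonneg _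
  simp only [Real.norm_eq_abs]
  rw [abs_of_nonneg h1]
  exact le_trans (hbound t ⟨ht.1.le, ht.2⟩) (le_abs_self _)


/-- `I` is the `L²(Ω;H)`-limit of left-endpoint Riemann sums of `Ψ` against `W` on `[0,T]`. -/
def IsStochInt (P : Measure Ω) (T : ℝ) (W : ℝ → Ω → ℝ) (Ψ : ℝ → Ω → H) (I : Ω → H) : Prop :=
  ∀ ε : ℝ, 0 < ε → ∃ δ : ℝ, 0 < δ ∧ ∀ (k : ℕ) (τ : ℕ → ℝ),
    τ 0 = 0 → τ k = T → (∀ i < k, τ i < τ (i + 1)) → (∀ i < k, τ (i + 1) - τ i < δ) →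
    ∫ ω, ‖(∑ i ∈ Finset.range k, (W (τ (i + 1)) ω - W (τ i) ω) • Ψ (τ i) ω) - I ω‖ ^ 2 ∂P < ε

/-- `W` is a standard scalar `(F_t)`-Wiener process. -/
def IsWiener (P : Measure Ω) (F : ℝ → MeasurableSpace Ω) (W : ℝ → Ω → ℝ) : Prop :=
  (∀ t : ℝ, Measurable[F t] (W t)) ∧ (∀ ω, W 0 ω = 0) ∧ (∀ t : ℝ, MemLp (W t) 2 P) ∧
  (∀ s t : ℝ, 0 ≤ s → s ≤ t →
    Indep (F s) (MeasurableSpace.comap (fun ω => W t ω - W s ω) inferInstance) P) ∧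
  (∀ s t : ℝ, 0 ≤ s → s ≤ t → ∫ ω, (W t ω - W s ω) ∂P = 0) ∧
  (∀ s t : ℝ, 0 ≤ s → s ≤ t → ∫ ω, (W t ω - W s ω) ^ 2 ∂P = t - s)

/-- Series stochastic integral: if `Ψ = (Ψ_i)` is a sequence of adapted PUC integrands
with `∫₀ᵀ Σ_i E|Ψ_i(τ)|² dτ < ∞`, then `Σ_i ∫₀ᵀ Ψ_i dW_i` converges in `L²(Ω;H)` and
`E|Σ_i ∫₀ᵀ Ψ_i dW_i|² = ∫₀ᵀ Σ_i E|Ψ_i(τ)|² dτ`. -/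
theorem series_stochastic_integral
    [SecondCountableTopology H] [MeasurableSpace H] [BorelSpace H]
    (P : Measure Ω) [IsProbabilityMeasure P]
    (F : ℝ → MeasurableSpace Ω)
    (hFmono : ∀ s t : ℝ, s ≤ t → F s ≤ F t)
    (hFle : ∀ t : ℝ, F t ≤ ‹MeasurableSpace Ω›)
    (W : ℕ → ℝ → Ω → ℝ) (hW : ∀ i, IsWiener P F (W i))
    (hWindep : iIndep (fun i : ℕ =>
      ⨆ t : ℝ, MeasurableSpace.comap (W i t) inferInstance) P)
    (T : ℝ) (hT : 0 < T)
    (Ψ : ℕ → ℝ → Ω → H)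
    (hadapted : ∀ i, ∀ t : ℝ, StronglyMeasurable[F t] (Ψ i t))
    (hL2 : ∀ i, ∀ t : ℝ, MemLp (Ψ i t) 2 P)
    (hPUC : ∀ i, PUCon P T (Ψ i))
    -- `∫₀ᵀ Σ_i E|Ψ_i(τ)|² dτ < ∞`
    (hsummable : ∀ t ∈ Set.Icc (0:ℝ) T, Summable fun i : ℕ => ∫ ω, ‖Ψ i t ω‖ ^ 2 ∂P)
    (hfin : IntervalIntegrable (fun t => ∑' i : ℕ, ∫ ω, ‖Ψ i t ω‖ ^ 2 ∂P)
      MeasureTheory.volume 0 T)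
    -- the single stochastic integrals `I i = ∫₀ᵀ Ψ_i dW_i`, satisfying the Itô isometry
    -- and pairwise orthogonality
    (I : ℕ → Ω → H) (hImem : ∀ i, MemLp (I i) 2 P)
    (hI : ∀ i, IsStochInt P T (W i) (Ψ i) (I i))
    (hIiso : ∀ i, ∫ ω, ‖I i ω‖ ^ 2 ∂P = ∫ t in (0:ℝ)..T, ∫ ω, ‖Ψ i t ω‖ ^ 2 ∂P)
    (hIorth : ∀ i j : ℕ, i ≠ j → ∫ ω, (inner ℝ (I i ω) (I j ω) : ℝ) ∂P = 0) :
    ∃ J : Ω → H, MemLp J 2 P ∧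
      Tendsto (fun n : ℕ =>
        ∫ ω, ‖(∑ i ∈ Finset.range n, I i ω) - J ω‖ ^ 2 ∂P) atTop (nhds 0) ∧
      ∫ ω, ‖J ω‖ ^ 2 ∂P = ∫ t in (0:ℝ)..T, ∑' i : ℕ, ∫ ω, ‖Ψ i t ω‖ ^ 2 ∂P := by
  
  classical
  have hfnonneg : ∀ (i : ℕ) (t : ℝ), 0 ≤ ∫ ω, ‖Ψ i t ω‖ ^ 2 ∂P :=
    fun i t => integral_nonneg fun ω => sq_nonneg _
  have hcnonneg : ∀ i, 0 ≤ ∫ ω, ‖I i ω‖ ^ 2 ∂P :=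
    fun i => integral_nonneg fun ω => sq_nonneg _
  have hgle : ∀ i, ∀ t ∈ Set.Icc (0:ℝ) T,
      (∫ ω, ‖Ψ i t ω‖ ^ 2 ∂P) ≤ ∑' j, ∫ ω, ‖Ψ j t ω‖ ^ 2 ∂P :=
    fun i t ht => Summable.le_tsum (hsummable t ht) i fun j _ => hfnonneg j t
  have hgint : IntegrableOn (fun t => ∑' i, ∫ ω, ‖Ψ i t ω‖ ^ 2 ∂P) (Set.Ioc 0 T) volume :=
    hfin.1
  have hfint : ∀ i, IntervalIntegrable (fun t => ∫ ω, ‖Ψ i t ω‖ ^ 2 ∂P) volume 0 T :=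
    fun i => puc_intervalIntegrable hT (hL2 i) (hPUC i) hgint (hgle i)
  have hsum_eq : ∀ n : ℕ, ∑ i ∈ Finset.range n, ∫ ω, ‖I i ω‖ ^ 2 ∂P
      = ∫ t in (0:ℝ)..T, ∑ i ∈ Finset.range n, ∫ ω, ‖Ψ i t ω‖ ^ 2 ∂P := by
    intro n
    rw [intervalIntegral.integral_finset_sum fun i _ => hfint i]
    exact Finset.sum_congr rfl fun i _ => hIiso i
  have hsum_int : ∀ n : ℕ, IntervalIntegrable
      (fun t => ∑ i ∈ Finset.range n, ∫ ω, ‖Ψ i t ω‖ ^ 2 ∂P) volume 0 T := by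
    intro n
    rw [intervalIntegrable_iff, Set.uIoc_of_le hT.le]
    exact integrable_finset_sum _ fun i _ => (hfint i).1
  have hpart : ∀ n : ℕ, ∑ i ∈ Finset.range n, ∫ ω, ‖I i ω‖ ^ 2 ∂P
      ≤ ∫ t in (0:ℝ)..T, ∑' i, ∫ ω, ‖Ψ i t ω‖ ^ 2 ∂P := by
    intro n
    rw [hsum_eq n]
    refine intervalIntegral.integral_mono_on hT.le (hsum_int n) hfin fun t ht => ?_
    exact Summable.sum_le_tsum (Finset.range n) (fun j _ => hfnonneg j t) (hsummable t ht)
  have hSummC : Summable (fun i => ∫ ω, ‖I i ω‖ ^ 2 ∂P) :=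
    summable_of_sum_range_le hcnonneg hpart
  have htendsto_int : Tendsto (fun n => ∑ i ∈ Finset.range n, ∫ ω, ‖I i ω‖ ^ 2 ∂P) atTop
      (nhds (∫ t in (0:ℝ)..T, ∑' i, ∫ ω, ‖Ψ i t ω‖ ^ 2 ∂P)) := by
    have h1 : ∀ n : ℕ, ∑ i ∈ Finset.range n, ∫ ω, ‖I i ω‖ ^ 2 ∂P
        = ∫ t in Set.Ioc (0:ℝ) T, ∑ i ∈ Finset.range n, ∫ ω, ‖Ψ i t ω‖ ^ 2 ∂P := by
      intro n; rw [hsum_eq n, intervalIntegral.integral_of_le hT.le]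
    rw [intervalIntegral.integral_of_le hT.le]
    simp only [h1]
    refine tendsto_integral_of_dominated_convergence
      (fun t => ∑' i, ∫ ω, ‖Ψ i t ω‖ ^ 2 ∂P) ?_ hgint ?_ ?_
    · intro n
      exact Finset.aestronglyMeasurable_fun_sum _ fun i _ => (hfint i).1.aestronglyMeasurable
    · intro n
      rw [ae_restrict_iff' measurableSet_Ioc]
      refine Eventually.of_forall fun t ht => ?_
      have h0 : (0:ℝ) ≤ ∑ i ∈ Finset.range n, ∫ ω, ‖Ψ i t ω‖ ^ 2 ∂P :=
        Finset.sum_nonneg fun i _ => hfnonneg i t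
      rw [Real.norm_eq_abs, abs_of_nonneg h0]
      exact Summable.sum_le_tsum (Finset.range n) (fun j _ => hfnonneg j t)
        (hsummable t ⟨ht.1.le, ht.2⟩)
    · rw [ae_restrict_iff' measurableSet_Ioc]
      refine Eventually.of_forall fun t ht => ?_
      exact (hsummable t ⟨ht.1.le, ht.2⟩).hasSum.tendsto_sum_nat
  -- pass to L²(Ω;H)
  set fI : ℕ → Lp H 2 P := fun i => (hImem i).toLp (I i) with hfI
  have hfI_norm : ∀ i, ‖fI i‖ ^ 2 = ∫ ω, ‖I i ω‖ ^ 2 ∂P := by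
    intro i
    rw [← lp_norm_sq (fI i)]
    refine integral_congr_ae ?_
    filter_upwards [(hImem i).coeFn_toLp] with ω h
    rw [hfI]
    simp only at h ⊢
    rw [h]
  have hfI_orth : ∀ i j, i ≠ j → (inner ℝ (fI i) (fI j) : ℝ) = 0 := by
    intro i j hij
    rw [L2.inner_def, ← hIorth i j hij]
    refine integral_congr_ae ?_
    filter_upwards [(hImem i).coeFn_toLp, (hImem j).coeFn_toLp] with ω h1 h2
    rw [h1, h2]
  set S : ℕ → Lp H 2 P := fun n => ∑ i ∈ Finset.range n, fI i with hS
  have hSnorm : ∀ s : Finset ℕ, ‖∑ i ∈ s, fI i‖ ^ 2 = ∑ i ∈ s, ∫ ω, ‖I i ω‖ ^ 2 ∂P := by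
    intro s
    rw [norm_sum_sq_of_orth fI s hfI_orth]
    exact Finset.sum_congr rfl fun i _ => hfI_norm i
  have hCauchy : CauchySeq S := by
    refine cauchySeq_of_le_tendsto_0
      (fun N => Real.sqrt (∑' i, ∫ ω, ‖I (i + N) ω‖ ^ 2 ∂P)) ?_ ?_
    · intro n m N hn hm
      wlog hmn : m ≤ n generalizing m n
      · rw [dist_comm]; exact this m n hm hn (le_of_not_ge hmn)
      have hsumm' : Summable (fun i => ∫ ω, ‖I (i + N) ω‖ ^ 2 ∂P) :=
        (summable_nat_add_iff N).2 hSummC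
      have key : dist (S n) (S m) ^ 2 ≤ ∑' i, ∫ ω, ‖I (i + N) ω‖ ^ 2 ∂P := by
        rw [dist_eq_norm, hS]
        simp only
        rw [← Finset.sum_Ico_eq_sub _ hmn, hSnorm (Finset.Ico m n)]
        calc ∑ i ∈ Finset.Ico m n, ∫ ω, ‖I i ω‖ ^ 2 ∂P
            ≤ ∑ i ∈ Finset.Ico N n, ∫ ω, ‖I i ω‖ ^ 2 ∂P :=
              Finset.sum_le_sum_of_subset_of_nonneg
                (Finset.Ico_subset_Ico hm le_rfl) (fun i _ _ => hcnonneg i)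
          _ = ∑ k ∈ Finset.range (n - N), ∫ ω, ‖I (k + N) ω‖ ^ 2 ∂P := by
              rw [Finset.sum_Ico_eq_sum_range]
              exact Finset.sum_congr rfl fun k _ => by rw [add_comm]
          _ ≤ ∑' i, ∫ ω, ‖I (i + N) ω‖ ^ 2 ∂P :=
              Summable.sum_le_tsum (Finset.range (n - N)) (fun j _ => hcnonneg _) hsumm'
      rw [Real.le_sqrt dist_nonneg (tsum_nonneg fun i => hcnonneg _)]
      exact key
    · have h1 : Tendsto (fun N => ∑' i, ∫ ω, ‖I (i + N) ω‖ ^ 2 ∂P) atTop (nhds 0) :=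
        tendsto_sum_nat_add (fun i => ∫ ω, ‖I i ω‖ ^ 2 ∂P)
      have h2 := (Real.continuous_sqrt.tendsto 0).comp h1
      simpa [Function.comp_def] using h2
  obtain ⟨JL, hJL⟩ := cauchySeq_tendsto_of_complete hCauchy
  refine ⟨fun ω => JL ω, Lp.memLp JL, ?_, ?_⟩
  · have key : ∀ n, ∫ ω, ‖(∑ i ∈ Finset.range n, I i ω) - JL ω‖ ^ 2 ∂P
        = ‖S n - JL‖ ^ 2 := by
      intro n
      rw [← lp_norm_sq (S n - JL)]
      have hae : ∀ᵐ ω ∂P, ∀ i ∈ Finset.range n, fI i ω = I i ω :=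
        (ae_ball_iff (Finset.range n).countable_toSet).2 fun i _ => (hImem i).coeFn_toLp
      refine integral_congr_ae ?_
      filter_upwards [Lp.coeFn_sub (S n) JL, lp_coeFn_sum fI (Finset.range n), hae]
        with ω h1 h2 h3
      rw [h1, Pi.sub_apply, hS]
      simp only
      rw [h2, Finset.sum_congr rfl h3]
    simp only [key]
    have h1 : Tendsto (fun n => ‖S n - JL‖) atTop (nhds 0) :=
      (tendsto_iff_norm_sub_tendsto_zero).1 hJL
    have h2 := h1.pow 2
    simpa using h2
  · have h1 : Tendsto (fun n => ‖S n‖ ^ 2) atTop (nhds (‖JL‖ ^ 2)) :=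
      ((continuous_norm.tendsto JL).comp hJL).pow 2
    have h3 : Tendsto (fun n => ‖S n‖ ^ 2) atTop
        (nhds (∫ t in (0:ℝ)..T, ∑' i, ∫ ω, ‖Ψ i t ω‖ ^ 2 ∂P)) := by
      have h2 : ∀ n, ‖S n‖ ^ 2 = ∑ i ∈ Finset.range n, ∫ ω, ‖I i ω‖ ^ 2 ∂P :=
        fun n => hSnorm _
      simp only [h2]
      exact htendsto_int
    have h4 : (∫ ω, ‖JL ω‖ ^ 2 ∂P) = ‖JL‖ ^ 2 := lp_norm_sq JL
    simp only
    rw [h4]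
    exact tendsto_nhds_unique h1 h3
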